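/- arXiv:2204.14051 — 5 statements merged into one kernel-verified Lean document; each statement's English description precedes it below -/
import Mathlib

section
/- (Equilibrium verification for contests with general prizes only, Theorem 2.) Let n ≥ 2, let H : [0,1] → [0,1] be continuously differentiable, strictly increasing, with H(0) = 0, H(1) = 1, and derivative h. Let w_1 ≥ w_2 ≥ … ≥ w_n ≥ 0 be prizes. Define p_j(b) = C(n−1, j−1) · H(b)^{n−j} (1−H(b))^{j−1}, f^H_{n−1,j}(y) = ((n−1)!/((j−1)!(n−1−j)!)) H(y)^{n−1−j} (1−H(y))^{j−1} h(y), and the strategy α(v) = Σ_{j=1}^{n−1} (w_j − w_{j+1}) ∫_0^v y f^H_{n−1,j}(y) dy. Then for all v, b ∈ [0,1]: v · Σ_{j=1}^{n} w_j p_j(b) − α(b) ≤ v · Σ_{j=1}^{n} w_j p_j(v) − α(v). That is, an agent of ability v maximizes her expected utility (expected prize value scaled by v minus output) by producing output α(v) rather than mimicking any other type b. -/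
open scoped Nat

/-- Density of the `j`-th highest order statistic out of `m` i.i.d. samples from `H`
(with density `h`): `f^H_{m,j}(y) = (m!/((j−1)!(m−j)!)) H(y)^{m−j} (1−H(y))^{j−1} h(y)`. -/
noncomputable def orderDensity (H h : ℝ → ℝ) (m j : ℕ) (y : ℝ) : ℝ :=
  ((m ! : ℝ) / (((j-1)! : ℝ) * ((m-j)! : ℝ))) * (H y)^(m-j) * (1 - H y)^(j-1) * h y

/-- Probability that an agent producing output `α(b)` is ranked `j`-th among herself and
`n−1` i.i.d. competitors with ability distribution `H`:
`p_j(b) = C(n−1, j−1) H(b)^{n−j} (1−H(b))^{j−1}`. -/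
noncomputable def winProb (H : ℝ → ℝ) (n j : ℕ) (b : ℝ) : ℝ :=
  ((n-1).choose (j-1) : ℝ) * (H b)^(n-j) * (1 - H b)^(j-1)

/-- Equilibrium strategy `α(v) = Σ_{j=1}^{n−1} (w_j − w_{j+1}) ∫_0^v y f^H_{n−1,j}(y) dy`. -/
noncomputable def eqStrategy (H h : ℝ → ℝ) (n : ℕ) (w : ℕ → ℝ) (v : ℝ) : ℝ :=
  ∑ j ∈ Finset.Icc 1 (n-1), (w j - w (j+1)) * ∫ y in (0:ℝ)..v, y * orderDensity H h (n-1) j y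

lemma fact_ratio (n J : ℕ) (hJ1 : 1 ≤ J) (hJn : J ≤ n - 1) (hn : 2 ≤ n) :
    (((n-1)! : ℝ) / (((J-1)! : ℝ) * ((n-1-J)! : ℝ)))
      = ((n-1).choose (J-1) : ℝ) * ((n - J : ℕ) : ℝ) := by
  have h1 : J - 1 ≤ n - 1 := Nat.sub_le_sub_right (hJn.trans (Nat.sub_le n 1)) 1
  have key : (n-1).choose (J-1) * (J-1)! * ((n-1) - (J-1))! = (n-1)! :=
    Nat.choose_mul_factorial_mul_factorial h1
  have h2 : (n-1) - (J-1) = n - J := by omega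
  have h3 : n - J = (n - 1 - J) + 1 := by omega
  rw [h2, h3, Nat.factorial_succ] at key
  have hpos1 : (0:ℝ) < ((J-1)! : ℝ) := by exact_mod_cast Nat.factorial_pos _
  have hpos2 : (0:ℝ) < ((n-1-J)! : ℝ) := by exact_mod_cast Nat.factorial_pos _
  rw [div_eq_iff (by positivity)]
  rw [h3]
  push_cast [← key]
  ring

lemma telescope_sum (n J : ℕ) (hn : 2 ≤ n) (hJ1 : 1 ≤ J) (hJn : J ≤ n - 1) (a c : ℝ) :
    ∑ j ∈ Finset.Icc 1 J, ((n-1).choose (j-1) : ℝ) *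
        ((((n-j:ℕ):ℝ) * a^(n-j-1) * c) * (1-a)^(j-1)
          + a^(n-j) * ((((j-1) : ℕ):ℝ) * (1-a)^(j-1-1) * (-c)))
      = ((n-1).choose (J-1) : ℝ) * ((n - J : ℕ):ℝ) * a^(n-1-J) * (1-a)^(J-1) * c := by
  set G : ℕ → ℝ := fun k => if k = 0 then 0 else
    ((n-1).choose (k-1) : ℝ) * ((n - k : ℕ):ℝ) * a^(n-1-k) * (1-a)^(k-1) * c with hG
  have hterm : ∀ j, 1 ≤ j → j ≤ J →
      ((n-1).choose (j-1) : ℝ) *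
        ((((n-j:ℕ):ℝ) * a^(n-j-1) * c) * (1-a)^(j-1)
          + a^(n-j) * ((((j-1) : ℕ):ℝ) * (1-a)^(j-1-1) * (-c)))
      = G j - G (j-1) := by
    intro j hj1 hjJ
    have hjn : j ≤ n - 1 := hjJ.trans hJn
    have hGj : G j = ((n-1).choose (j-1) : ℝ) * ((n - j : ℕ):ℝ) * a^(n-1-j) * (1-a)^(j-1) * c := by
      have : j ≠ 0 := by omega
      simp only [hG, this, if_false]
    have he : n - 1 - j = n - j - 1 := by omega
    rw [hGj, he]
    rcases Nat.lt_or_ge j 2 with h2 | h2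
    · have : j = 1 := by omega
      subst this
      simp [hG]
    · -- j ≥ 2
      have hj0 : j - 1 ≠ 0 := by omega
      have hGj1 : G (j-1) = ((n-1).choose (j-2) : ℝ) * ((n - (j-1) : ℕ):ℝ)
          * a^(n-1-(j-1)) * (1-a)^(j-1-1) * c := by
        simp only [hG, hj0, if_false]
        rw [show j - 1 - 1 = j - 2 from by omega]
      have hchn : (n-1).choose (j-1) * (j-1) = (n-1).choose (j-2) * (n - (j-1)) := by
        have := Nat.choose_succ_right_eq (n-1) (j-2)
        have e1 : j - 2 + 1 = j - 1 := by omega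
        have e2 : (n-1) - (j-2) = n - (j-1) := by omega
        rw [e1, e2] at this; exact this
      have hch : ((n-1).choose (j-1) : ℝ) * (((j-1):ℕ):ℝ)
          = ((n-1).choose (j-2) : ℝ) * ((n - (j-1) : ℕ):ℝ) := by exact_mod_cast hchn
      have he2 : n - 1 - (j-1) = n - j := by omega
      rw [hGj1, he2]
      linear_combination (-(a^(n-j) * (1-a)^(j-1-1) * c)) * hch
  have hsum : ∑ j ∈ Finset.Icc 1 J, (G j - G (j-1)) = G J - G 0 := by
    rw [← Finset.Ico_add_one_right_eq_Icc, Finset.sum_Ico_eq_sum_range]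
    have : ∀ i, G (1 + i) - G (1 + i - 1) = G (i+1) - G i := by
      intro i; congr 1 <;> congr 1 <;> omega
    simp only [this, Nat.add_sub_cancel]
    exact Finset.sum_range_sub G J
  rw [Finset.sum_congr rfl (fun j hj => by
    simp only [Finset.mem_Icc] at hj; exact hterm j hj.1 hj.2), hsum]
  have hJ0 : J ≠ 0 := by omega
  simp only [hG, hJ0, if_false, if_pos rfl, sub_zero]

lemma winProb_total (H : ℝ → ℝ) (n : ℕ) (hn : 2 ≤ n) (x : ℝ) :
    ∑ j ∈ Finset.Icc 1 n, winProb H n j x = 1 := by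
  have step : ∑ j ∈ Finset.Icc 1 n, winProb H n j x
      = ∑ k ∈ Finset.range n, ((n-1).choose k : ℝ) * (H x)^(n-1-k) * (1 - H x)^k := by
    rw [← Finset.Ico_add_one_right_eq_Icc, Finset.sum_Ico_eq_sum_range, Nat.add_sub_cancel]
    apply Finset.sum_congr rfl
    intro k hk
    have e1 : 1 + k - 1 = k := by omega
    have e2 : n - (1+k) = n - 1 - k := by omega
    rw [winProb, e1, e2]
  rw [step]
  have hb := add_pow (1 - H x) (H x) (n-1)
  simp only [sub_add_cancel, one_pow] at hb
  conv_rhs => rw [hb]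
  rw [show n - 1 + 1 = n from by omega]
  apply Finset.sum_congr rfl
  intro k hk
  ring

lemma abel_sum (n : ℕ) (hn : 2 ≤ n) (w : ℕ → ℝ) (p : ℕ → ℝ) :
    ∑ j ∈ Finset.Icc 1 n, w j * p j
      = ∑ J ∈ Finset.Icc 1 (n-1), (w J - w (J+1)) * (∑ j ∈ Finset.Icc 1 J, p j)
        + w n * ∑ j ∈ Finset.Icc 1 n, p j := by
  have tel : ∀ j, 1 ≤ j → j ≤ n →
      w j = w n + ∑ J ∈ Finset.Icc j (n-1), (w J - w (J+1)) := by
    intro j hj1 hjn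
    rw [← Finset.Ico_add_one_right_eq_Icc, show n - 1 + 1 = n from by omega, Finset.sum_Ico_eq_sum_range]
    rcases le_or_gt n j with h | h
    · have : n = j := by omega
      simp [this]
    · have hsub := Finset.sum_range_sub' (fun i => w (j + i)) (n - j)
      have : ∀ i ∈ Finset.range (n - j), w (j + i) - w (j + i + 1) = w (j+i) - w (j + (i+1)) := by
        intro i _; congr 2 <;> omega
      rw [Finset.sum_congr rfl this, hsub, show j + (n - j) = n from by omega]
      ring
  calc ∑ j ∈ Finset.Icc 1 n, w j * p j
      = ∑ j ∈ Finset.Icc 1 n, (w n * p j + ∑ J ∈ Finset.Icc j (n-1), (w J - w (J+1)) * p j) := by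
        apply Finset.sum_congr rfl
        intro j hj
        simp only [Finset.mem_Icc] at hj
        rw [tel j hj.1 hj.2]
        rw [add_mul, Finset.sum_mul]
    _ = w n * ∑ j ∈ Finset.Icc 1 n, p j
        + ∑ j ∈ Finset.Icc 1 n, ∑ J ∈ Finset.Icc j (n-1), (w J - w (J+1)) * p j := by
        rw [Finset.sum_add_distrib, Finset.mul_sum]
    _ = w n * ∑ j ∈ Finset.Icc 1 n, p j
        + ∑ j ∈ Finset.Icc 1 (n-1), ∑ J ∈ Finset.Icc j (n-1), (w J - w (J+1)) * p j := by
        congr 1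
        rw [show Finset.Icc 1 n = insert n (Finset.Icc 1 (n-1)) from by
          ext x; simp only [Finset.mem_Icc, Finset.mem_insert]; omega]
        rw [Finset.sum_insert (by simp; omega)]
        rw [show Finset.Icc n (n-1) = ∅ from Finset.Icc_eq_empty (by omega)]
        simp
    _ = ∑ J ∈ Finset.Icc 1 (n-1), (w J - w (J+1)) * (∑ j ∈ Finset.Icc 1 J, p j)
        + w n * ∑ j ∈ Finset.Icc 1 n, p j := by
        rw [Finset.sum_comm' (t' := Finset.Icc 1 (n-1)) (s' := fun J => Finset.Icc 1 J)
          (by intro x y; simp only [Finset.mem_Icc]; omega)]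
        simp_rw [Finset.mul_sum]
        ring

lemma h_nonneg (H h : ℝ → ℝ)
    (hmono : StrictMonoOn H (Set.Icc (0:ℝ) 1))
    (hderiv : ∀ v ∈ Set.Icc (0:ℝ) 1, HasDerivWithinAt H (h v) (Set.Icc (0:ℝ) 1) v)
    (x : ℝ) (hx : x ∈ Set.Icc (0:ℝ) 1) : 0 ≤ h x := by
  have hslope := hasDerivWithinAt_iff_tendsto_slope.mp (hderiv x hx)
  have hNe : (nhdsWithin x (Set.Icc (0:ℝ) 1 \ {x})).NeBot := by
    rw [← mem_closure_iff_nhdsWithin_neBot]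
    rcases lt_or_ge x 1 with h1 | h1
    · have hsub : Set.Ioo x 1 ⊆ Set.Icc (0:ℝ) 1 \ {x} := by
        intro y hy
        constructor
        · exact ⟨le_trans hx.1 hy.1.le, hy.2.le⟩
        · simp only [Set.mem_singleton_iff]
          intro hc
          rw [hc] at hy
          exact lt_irrefl x hy.1
      apply closure_mono hsub
      rw [closure_Ioo (ne_of_lt h1)]
      exact ⟨le_refl x, h1.le⟩
    · have hx1 : x = 1 := le_antisymm hx.2 h1
      have hsub : Set.Ioo (0:ℝ) 1 ⊆ Set.Icc (0:ℝ) 1 \ {x} := by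
        intro y hy
        exact ⟨⟨hy.1.le, hy.2.le⟩, by simp only [Set.mem_singleton_iff]; intro hc; rw [hc, hx1] at hy; exact lt_irrefl 1 hy.2⟩
      apply closure_mono hsub
      rw [closure_Ioo (by norm_num : (0:ℝ) ≠ 1)]
      exact ⟨hx.1, hx.2⟩
  apply ge_of_tendsto hslope
  filter_upwards [self_mem_nhdsWithin] with y hy
  rcases hy with ⟨hy1, hy2⟩
  have hne : y ≠ x := by simpa using hy2
  rcases lt_or_gt_of_ne hne with hlt | hgt
  · rw [slope_def_field]
    apply div_nonneg_of_nonpos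
    · simp only [sub_nonpos]; exact (hmono hy1 hx hlt).le
    · linarith
  · rw [slope_def_field]
    apply div_nonneg
    · simp only [sub_nonneg]; exact (hmono hx hy1 hgt).le
    · linarith

lemma partialSum_hasDeriv (n : ℕ) (hn : 2 ≤ n) (H h : ℝ → ℝ)
    (hderiv : ∀ v ∈ Set.Icc (0:ℝ) 1, HasDerivWithinAt H (h v) (Set.Icc (0:ℝ) 1) v)
    (J : ℕ) (hJ1 : 1 ≤ J) (hJn : J ≤ n - 1) (x : ℝ) (hx : x ∈ Set.Icc (0:ℝ) 1) :
    HasDerivWithinAt (fun y => ∑ j ∈ Finset.Icc 1 J, winProb H n j y)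
      (orderDensity H h (n-1) J x) (Set.Icc (0:ℝ) 1) x := by
  have key : HasDerivWithinAt (fun y => ∑ j ∈ Finset.Icc 1 J, winProb H n j y)
      (∑ j ∈ Finset.Icc 1 J, ((n-1).choose (j-1) : ℝ) *
        ((((n-j:ℕ):ℝ) * (H x)^(n-j-1) * h x) * (1 - H x)^(j-1)
          + (H x)^(n-j) * ((((j-1) : ℕ):ℝ) * (1 - H x)^(j-1-1) * (-(h x)))))
      (Set.Icc (0:ℝ) 1) x := by
    apply HasDerivWithinAt.fun_sum
    intro j hj
    have h1 : HasDerivWithinAt (fun y => (H y)^(n-j))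
        (((n-j:ℕ):ℝ) * (H x)^(n-j-1) * h x) (Set.Icc (0:ℝ) 1) x :=
      (hderiv x hx).pow (n-j)
    have h2 : HasDerivWithinAt (fun y => (1 - H y)^(j-1))
        ((((j-1):ℕ):ℝ) * (1 - H x)^(j-1-1) * (-(h x))) (Set.Icc (0:ℝ) 1) x :=
      by simpa using ((hasDerivWithinAt_const x _ (1:ℝ)).fun_sub (hderiv x hx)).fun_pow (j-1)
    have h3 := (h1.mul h2).const_mul (((n-1).choose (j-1) : ℝ))
    have hfe : (fun y => winProb H n j y)
        = fun y => ((n-1).choose (j-1) : ℝ) * ((H y)^(n-j) * (1 - H y)^(j-1)) := by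
      funext y; rw [winProb]; ring
    rw [show winProb H n j = fun y => ((n-1).choose (j-1) : ℝ) * ((H y)^(n-j) * (1 - H y)^(j-1)) from hfe]
    exact h3
  rw [telescope_sum n J hn hJ1 hJn (H x) (h x)] at key
  have : orderDensity H h (n-1) J x
      = ((n-1).choose (J-1) : ℝ) * ((n - J : ℕ):ℝ) * (H x)^(n-1-J) * (1 - H x)^(J-1) * h x := by
    rw [orderDensity, fact_ratio n J hJ1 hJn hn]
  rw [this]
  exact key


/-- Theorem 2, equilibrium verification for general prizes only: with abilities
i.i.d. from `H` and prizes `w_1 ≥ … ≥ w_n ≥ 0`, an agent of ability `v` maximizes her expected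
utility `v·Σ_j w_j p_j(b) − α(b)` by choosing `b = v`. -/
theorem equilibrium_general_prizes (n : ℕ) (hn : 2 ≤ n) (H h : ℝ → ℝ)
    (hmono : StrictMonoOn H (Set.Icc (0:ℝ) 1))
    (hH0 : H 0 = 0) (hH1 : H 1 = 1)
    (hderiv : ∀ v ∈ Set.Icc (0:ℝ) 1, HasDerivWithinAt H (h v) (Set.Icc (0:ℝ) 1) v)
    (hcont : ContinuousOn h (Set.Icc (0:ℝ) 1))
    (w : ℕ → ℝ)
    (hw : ∀ j, 1 ≤ j → j < n → w (j+1) ≤ w j) (hwn : 0 ≤ w n) :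
    ∀ v ∈ Set.Icc (0:ℝ) 1, ∀ b ∈ Set.Icc (0:ℝ) 1,
      v * (∑ j ∈ Finset.Icc 1 n, w j * winProb H n j b) - eqStrategy H h n w b
        ≤ v * (∑ j ∈ Finset.Icc 1 n, w j * winProb H n j v) - eqStrategy H h n w v := by
  intro v hv b hb
  -- basic facts
  have hHcont : ContinuousOn H (Set.Icc (0:ℝ) 1) :=
    fun x hx => (hderiv x hx).continuousWithinAt
  have hH01 : ∀ x ∈ Set.Icc (0:ℝ) 1, 0 ≤ H x ∧ H x ≤ 1 := by
    intro x hx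
    constructor
    · rw [← hH0]; exact hmono.monotoneOn (Set.left_mem_Icc.mpr (by norm_num)) hx hx.1
    · rw [← hH1]; exact hmono.monotoneOn hx (Set.right_mem_Icc.mpr (by norm_num)) hx.2
  have hhnn : ∀ x ∈ Set.Icc (0:ℝ) 1, 0 ≤ h x :=
    fun x hx => h_nonneg H h hmono hderiv x hx
  have hfnonneg : ∀ J, ∀ x ∈ Set.Icc (0:ℝ) 1, 0 ≤ orderDensity H h (n-1) J x := by
    intro J x hx
    rw [orderDensity]
    have hx0 := (hH01 x hx).1
    have hx1 : (0:ℝ) ≤ 1 - H x := by linarith [(hH01 x hx).2]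
    have hhx := hhnn x hx
    have f1 : (0:ℝ) ≤ ((n-1)! : ℝ) := by positivity
    have f2 : (0:ℝ) < ((J-1)! : ℝ) := by exact_mod_cast Nat.factorial_pos _
    have f3 : (0:ℝ) < ((n-1-J)! : ℝ) := by exact_mod_cast Nat.factorial_pos _
    apply mul_nonneg
    apply mul_nonneg
    apply mul_nonneg
    · positivity
    · exact pow_nonneg hx0 _
    · exact pow_nonneg hx1 _
    · exact hhx
  have hfcont : ∀ J, ContinuousOn (orderDensity H h (n-1) J) (Set.Icc (0:ℝ) 1) := by
    intro J
    unfold orderDensity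
    exact (((continuousOn_const.mul (hHcont.pow _)).mul
      (((continuousOn_const.sub hHcont).pow _))).mul hcont)
  -- the key per-J inequality
  have key : ∀ J, 1 ≤ J → J ≤ n - 1 →
      v * ((∑ j ∈ Finset.Icc 1 J, winProb H n j b) - (∑ j ∈ Finset.Icc 1 J, winProb H n j v))
        - ((∫ y in (0:ℝ)..b, y * orderDensity H h (n-1) J y)
            - (∫ y in (0:ℝ)..v, y * orderDensity H h (n-1) J y)) ≤ 0 := by
    intro J hJ1 hJn
    have huIcc : Set.uIcc v b ⊆ Set.Icc (0:ℝ) 1 := Set.uIcc_subset_Icc hv hb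
    have hintgJ : IntervalIntegrable (orderDensity H h (n-1) J) MeasureTheory.volume v b :=
      ((hfcont J).mono huIcc).intervalIntegrable
    -- FTC: S_J b - S_J v = ∫ v..b f_J
    have hftc : (∫ y in v..b, orderDensity H h (n-1) J y)
        = (∑ j ∈ Finset.Icc 1 J, winProb H n j b) - (∑ j ∈ Finset.Icc 1 J, winProb H n j v) := by
      apply intervalIntegral.integral_eq_sub_of_hasDeriv_right
      · apply ContinuousOn.mono _ huIcc
        apply continuousOn_finset_sum
        intro j hj
        unfold winProb
        exact (continuousOn_const.mul (hHcont.pow _)).mul ((continuousOn_const.sub hHcont).pow _)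
      · intro x hx
        have hx01 : x ∈ Set.Ioo (0:ℝ) 1 := by
          constructor
          · exact lt_of_le_of_lt (le_min hv.1 hb.1) hx.1
          · exact lt_of_lt_of_le hx.2 (max_le hv.2 hb.2)
        have hmem : x ∈ Set.Icc (0:ℝ) 1 := ⟨hx01.1.le, hx01.2.le⟩
        have := partialSum_hasDeriv n hn H h hderiv J hJ1 hJn x hmem
        have hnhds : Set.Icc (0:ℝ) 1 ∈ nhds x := Icc_mem_nhds hx01.1 hx01.2
        exact (this.hasDerivAt hnhds).hasDerivWithinAt
      · exact hintgJ
    -- split integrals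
    have hint1 : IntervalIntegrable (fun y => y * orderDensity H h (n-1) J y)
        MeasureTheory.volume 0 b := by
      apply ContinuousOn.intervalIntegrable
      apply (continuousOn_id.mul (hfcont J)).mono
      exact Set.uIcc_subset_Icc (Set.left_mem_Icc.mpr (by norm_num)) hb
    have hint2 : IntervalIntegrable (fun y => y * orderDensity H h (n-1) J y)
        MeasureTheory.volume 0 v := by
      apply ContinuousOn.intervalIntegrable
      apply (continuousOn_id.mul (hfcont J)).mono
      exact Set.uIcc_subset_Icc (Set.left_mem_Icc.mpr (by norm_num)) hv
    have hsplit : (∫ y in (0:ℝ)..b, y * orderDensity H h (n-1) J y)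
        - (∫ y in (0:ℝ)..v, y * orderDensity H h (n-1) J y)
        = ∫ y in v..b, y * orderDensity H h (n-1) J y :=
      intervalIntegral.integral_interval_sub_left hint1 hint2
    rw [hsplit, ← hftc, ← intervalIntegral.integral_const_mul, ← intervalIntegral.integral_sub]
    · -- ∫ v..b (v - y) f_J(y) dy ≤ 0
      have heq : ∀ y, v * orderDensity H h (n-1) J y - y * orderDensity H h (n-1) J y
          = (v - y) * orderDensity H h (n-1) J y := fun y => by ring
      simp only [heq]
      rcases le_total v b with hvb | hbv
      · rw [← neg_nonneg, ← intervalIntegral.integral_neg]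
        apply intervalIntegral.integral_nonneg hvb
        intro u hu
        have hu01 : u ∈ Set.Icc (0:ℝ) 1 := ⟨le_trans hv.1 hu.1, le_trans hu.2 hb.2⟩
        have : 0 ≤ orderDensity H h (n-1) J u := hfnonneg J u hu01
        nlinarith [hu.1]
      · rw [intervalIntegral.integral_symm]
        simp only [neg_nonpos, neg_le, neg_zero]
        apply intervalIntegral.integral_nonneg hbv
        intro u hu
        have hu01 : u ∈ Set.Icc (0:ℝ) 1 := ⟨le_trans hb.1 hu.1, le_trans hu.2 hv.2⟩
        have : 0 ≤ orderDensity H h (n-1) J u := hfnonneg J u hu01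
        nlinarith [hu.2]
    · exact hintgJ.const_mul v
    · apply ContinuousOn.intervalIntegrable
      exact (continuousOn_id.mul ((hfcont J).mono huIcc)).mono (by exact subset_rfl)
  -- assemble with Abel summation
  rw [abel_sum n hn w (fun j => winProb H n j b), abel_sum n hn w (fun j => winProb H n j v),
    winProb_total H n hn b, winProb_total H n hn v]
  unfold eqStrategy
  rw [← sub_nonpos]
  have expand :
      v * ((∑ J ∈ Finset.Icc 1 (n-1), (w J - w (J+1)) * ∑ j ∈ Finset.Icc 1 J, winProb H n j b) + w n * 1)
        - (∑ J ∈ Finset.Icc 1 (n-1), (w J - w (J+1)) * ∫ y in (0:ℝ)..b, y * orderDensity H h (n-1) J y)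
        - (v * ((∑ J ∈ Finset.Icc 1 (n-1), (w J - w (J+1)) * ∑ j ∈ Finset.Icc 1 J, winProb H n j v) + w n * 1)
          - (∑ J ∈ Finset.Icc 1 (n-1), (w J - w (J+1)) * ∫ y in (0:ℝ)..v, y * orderDensity H h (n-1) J y))
      = ∑ J ∈ Finset.Icc 1 (n-1), (w J - w (J+1)) *
          (v * ((∑ j ∈ Finset.Icc 1 J, winProb H n j b) - (∑ j ∈ Finset.Icc 1 J, winProb H n j v))
            - ((∫ y in (0:ℝ)..b, y * orderDensity H h (n-1) J y)
                - (∫ y in (0:ℝ)..v, y * orderDensity H h (n-1) J y))) := by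
    rw [Finset.sum_congr rfl (fun J _ => by ring :
      ∀ J ∈ Finset.Icc 1 (n-1), (w J - w (J+1)) *
          (v * ((∑ j ∈ Finset.Icc 1 J, winProb H n j b) - (∑ j ∈ Finset.Icc 1 J, winProb H n j v))
            - ((∫ y in (0:ℝ)..b, y * orderDensity H h (n-1) J y)
                - (∫ y in (0:ℝ)..v, y * orderDensity H h (n-1) J y)))
        = (v * ((w J - w (J+1)) * ∑ j ∈ Finset.Icc 1 J, winProb H n j b)
            - v * ((w J - w (J+1)) * ∑ j ∈ Finset.Icc 1 J, winProb H n j v))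
          - ((w J - w (J+1)) * (∫ y in (0:ℝ)..b, y * orderDensity H h (n-1) J y)
            - (w J - w (J+1)) * (∫ y in (0:ℝ)..v, y * orderDensity H h (n-1) J y)))]
    rw [Finset.sum_sub_distrib, Finset.sum_sub_distrib, Finset.sum_sub_distrib,
      ← Finset.mul_sum, ← Finset.mul_sum]
    ring
  rw [expand]
  apply Finset.sum_nonpos
  intro J hJ
  simp only [Finset.mem_Icc] at hJ
  have hdw : 0 ≤ w J - w (J+1) := by
    have := hw J hJ.1 (by omega)
    linarith
  exact mul_nonpos_of_nonneg_of_nonpos hdw (key J hJ.1 hJ.2)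
end

section
/- (Equilibrium verification for contests with target group-specific prizes only, Theorem 3.) Let n ≥ 2, μ ∈ (0,1], let F : [0,1] → [0,1] be continuously differentiable, strictly increasing, with F(0) = 0, F(1) = 1, and derivative f. Let ω_1 ≥ ω_2 ≥ … ≥ ω_n ≥ 0 be prizes. Set H(y) = (1−μ) + μF(y) with derivative h(y) = μ f(y). Define p_j(b) = C(n−1, j−1) · H(b)^{n−j} (1−H(b))^{j−1}, f^H_{n−1,j}(y) = ((n−1)!/((j−1)!(n−1−j)!)) H(y)^{n−1−j} (1−H(y))^{j−1} μ f(y), and the strategy α(v) = Σ_{j=1}^{n−1} (ω_j − ω_{j+1}) ∫_0^v y f^H_{n−1,j}(y) dy. Then for all v, b ∈ [0,1]: v · Σ_{j=1}^{n} ω_j p_j(b) − α(b) ≤ v · Σ_{j=1}^{n} ω_j p_j(v) − α(v). -/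
open scoped Nat Topology

lemma aux_f_nonneg (F f : ℝ → ℝ) (hmono : StrictMonoOn F (Set.Icc (0:ℝ) 1))
    (hderiv : ∀ v ∈ Set.Icc (0:ℝ) 1, HasDerivWithinAt F (f v) (Set.Icc (0:ℝ) 1) v) :
    ∀ x ∈ Set.Icc (0:ℝ) 1, 0 ≤ f x := by
  intro x hx
  have hmono' := hmono.monotoneOn
  have hs := (hasDerivWithinAt_iff_tendsto_slope).1 (hderiv x hx)
  have hne : (𝓝[Set.Icc (0:ℝ) 1 \ {x}] x).NeBot := by
    rcases lt_or_eq_of_le hx.2 with hx1 | hx1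
    · refine (left_nhdsWithin_Ioc_neBot hx1).mono (nhdsWithin_mono _ ?_)
      intro y hy
      exact ⟨⟨le_trans hx.1 hy.1.le, hy.2⟩, by simp [(ne_of_gt hy.1)]⟩
    · have hx0 : (0:ℝ) < x := by rw [hx1]; norm_num
      refine (right_nhdsWithin_Ico_neBot hx0).mono (nhdsWithin_mono _ ?_)
      intro y hy
      exact ⟨⟨hy.1, le_trans hy.2.le hx.2⟩, by simp [ne_of_lt hy.2]⟩
  refine ge_of_tendsto hs ?_
  filter_upwards [self_mem_nhdsWithin] with y hy
  have hyI : y ∈ Set.Icc (0:ℝ) 1 := hy.1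
  have hyx : y ≠ x := by simpa using hy.2
  rw [slope_def_field]
  rcases lt_or_gt_of_ne hyx with h | h
  · exact div_nonneg_of_nonpos (sub_nonpos.2 (hmono' hyI hx h.le)) (sub_nonpos.2 h.le)
  · exact div_nonneg (sub_nonneg.2 (hmono' hx hyI h.le)) (sub_nonneg.2 h.le)

lemma aux_div_mul (A B C c : ℝ) (hB : B ≠ 0) (hC : C ≠ 0) (hc : c ≠ 0) :
    A / (B * (c * C)) * c = A / (B * C) := by
  field_simp

lemma aux_div_mul2 (A B C c : ℝ) (hB : B ≠ 0) (hC : C ≠ 0) (hc : c ≠ 0) :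
    A / (c * B * C) * c = A / (B * C) := by
  field_simp

lemma aux_choose1 (n j : ℕ) (h1 : 1 ≤ j) (h2 : j ≤ n - 1) (hn : 2 ≤ n) :
    ((n-1).choose (j-1) : ℝ) * ((n-j : ℕ) : ℝ)
      = ((n-1)! : ℝ) / (((j-1)! : ℝ) * (((n-1)-j)! : ℝ)) := by
  have e1 : (n-1) - (j-1) = n - j := by omega
  have e2 : n - j = ((n-1) - j) + 1 := by omega
  rw [Nat.cast_choose ℝ (by omega : j-1 ≤ n-1), e1, e2, Nat.factorial_succ, Nat.cast_mul]
  exact aux_div_mul _ _ _ _ (Nat.cast_ne_zero.2 (Nat.factorial_ne_zero _))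
    (Nat.cast_ne_zero.2 (Nat.factorial_ne_zero _)) (Nat.cast_ne_zero.2 (by omega))

lemma aux_choose2 (n j : ℕ) (h1 : 1 ≤ j) (h2 : j ≤ n - 1) (hn : 2 ≤ n) :
    ((n-1).choose j : ℝ) * (j : ℝ)
      = ((n-1)! : ℝ) / (((j-1)! : ℝ) * (((n-1)-j)! : ℝ)) := by
  have e2 : j = (j - 1) + 1 := by omega
  rw [Nat.cast_choose ℝ (by omega : j ≤ n-1)]
  nth_rewrite 1 [e2]
  rw [Nat.factorial_succ, Nat.cast_mul]
  have e3 : (((j - 1) + 1 : ℕ) : ℝ) = (j : ℝ) := by rw [← e2]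
  rw [e3]
  exact aux_div_mul2 _ _ _ _ (Nat.cast_ne_zero.2 (Nat.factorial_ne_zero _))
    (Nat.cast_ne_zero.2 (Nat.factorial_ne_zero _)) (Nat.cast_ne_zero.2 (by omega))

lemma aux_sum_identity (n : ℕ) (hn : 2 ≤ n) (ω : ℕ → ℝ) (H h : ℝ → ℝ) (x : ℝ) :
    ∑ j ∈ Finset.Icc 1 n, ω j * (((n-1).choose (j-1) : ℝ) *
      (((n-j : ℕ) : ℝ) * (H x)^(n-j-1) * (1 - H x)^(j-1)
        - ((j-1 : ℕ) : ℝ) * (H x)^(n-j) * (1 - H x)^(j-2)) * h x)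
    = ∑ j ∈ Finset.Icc 1 (n-1), (ω j - ω (j+1)) * orderDensity H h (n-1) j x := by
  have key : ∀ j ∈ Finset.Icc 1 n,
      ω j * (((n-1).choose (j-1) : ℝ) *
      (((n-j : ℕ) : ℝ) * (H x)^(n-j-1) * (1 - H x)^(j-1)
        - ((j-1 : ℕ) : ℝ) * (H x)^(n-j) * (1 - H x)^(j-2)) * h x)
      = (ω j * (((n-1).choose (j-1) : ℝ) * ((n-j : ℕ) : ℝ) * (H x)^(n-j-1) * (1 - H x)^(j-1) * h x))
        - (ω j * (((n-1).choose (j-1) : ℝ) * ((j-1 : ℕ) : ℝ) * (H x)^(n-j) * (1 - H x)^(j-2) * h x)) := by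
    intro j _; ring
  rw [Finset.sum_congr rfl key, Finset.sum_sub_distrib]
  have e1 : ∑ j ∈ Finset.Icc 1 n,
      ω j * (((n-1).choose (j-1) : ℝ) * ((n-j : ℕ) : ℝ) * (H x)^(n-j-1) * (1 - H x)^(j-1) * h x)
      = ∑ j ∈ Finset.Icc 1 (n-1), ω j * orderDensity H h (n-1) j x := by
    have hn' : n = (n-1) + 1 := by omega
    rw [hn']
    rw [Finset.sum_Icc_succ_top (by omega : 1 ≤ (n-1)+1)]
    rw [← hn', Nat.sub_self]
    have hz : ω n * (((n-1).choose (n-1) : ℝ) * ((0:ℕ) : ℝ) * (H x)^(0-1) * (1 - H x)^(n-1) * h x) = 0 := by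
      simp
    rw [hz, add_zero]
    refine Finset.sum_congr rfl ?_
    intro j hj
    simp only [Finset.mem_Icc] at hj
    rw [aux_choose1 n j hj.1 hj.2 hn]
    have e : n - j - 1 = (n-1) - j := by omega
    rw [e, orderDensity]
  have e2 : ∑ j ∈ Finset.Icc 1 n,
      ω j * (((n-1).choose (j-1) : ℝ) * ((j-1 : ℕ) : ℝ) * (H x)^(n-j) * (1 - H x)^(j-2) * h x)
      = ∑ j ∈ Finset.Icc 1 (n-1), ω (j+1) * orderDensity H h (n-1) j x := by
    rw [Finset.Icc_eq_cons_Ioc (by omega : 1 ≤ n), Finset.sum_cons]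
    have hz : ω 1 * (((n-1).choose (1-1) : ℝ) * ((1-1 : ℕ) : ℝ) * (H x)^(n-1) * (1 - H x)^(1-2) * h x) = 0 := by
      simp
    rw [hz, zero_add]
    have hIoc : Finset.Ioc 1 n = Finset.Icc 2 n := (Finset.Icc_add_one_left_eq_Ioc 1 n).symm
    rw [hIoc]
    have hmap : Finset.Icc 2 n = (Finset.Icc 1 (n-1)).map (addRightEmbedding 1) := by
      rw [Finset.map_add_right_Icc]
      congr 1
      omega
    rw [hmap, Finset.sum_map]
    refine Finset.sum_congr rfl ?_
    intro j hj
    simp only [Finset.mem_Icc] at hj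
    simp only [addRightEmbedding_apply]
    have e : (j + 1) - 1 = j := by omega
    have e' : n - (j+1) = (n-1) - j := by omega
    have e'' : (j+1) - 2 = j - 1 := by omega
    rw [e, e', e'', aux_choose2 n j hj.1 hj.2 hn, orderDensity]
  rw [e1, e2, ← Finset.sum_sub_distrib]
  refine Finset.sum_congr rfl ?_
  intro j _
  ring

lemma aux_deriv_winProb (n j : ℕ) (H h : ℝ → ℝ) (x : ℝ) (s : Set ℝ)
    (hH : HasDerivWithinAt H (h x) s x) :
    HasDerivWithinAt (fun b => winProb H n j b)
      (((n-1).choose (j-1) : ℝ) *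
        (((n-j : ℕ) : ℝ) * (H x)^(n-j-1) * (1 - H x)^(j-1)
          - ((j-1 : ℕ) : ℝ) * (H x)^(n-j) * (1 - H x)^(j-2)) * h x) s x := by
  have h1 : HasDerivWithinAt (fun b => (H b)^(n-j))
      (((n-j:ℕ):ℝ) * (H x)^(n-j-1) * h x) s x := hH.pow _
  have h2 : HasDerivWithinAt (fun b => (1 - H b)^(j-1))
      (((j-1:ℕ):ℝ) * (1 - H x)^(j-1-1) * (-h x)) s x := by
    have := (hH.const_sub 1).fun_pow (j-1)
    convert this using 2
  have h3 := (h1.fun_mul h2).const_mul ((n-1).choose (j-1) : ℝ)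
  have hfun : (fun b => winProb H n j b)
      = fun b => ((n-1).choose (j-1) : ℝ) * ((H b)^(n-j) * (1 - H b)^(j-1)) := by
    funext b
    rw [winProb]
    ring
  rw [hfun]
  refine h3.congr_deriv ?_
  have e : j - 1 - 1 = j - 2 := by omega
  rw [e]
  ring

/-- Theorem 3, equilibrium verification for target group-specific prizes only:
with the effective competitor ability distribution `H(y) = (1−μ) + μF(y)` (density `μf`),
and prizes `ω_1 ≥ … ≥ ω_n ≥ 0`, a target-group agent of ability `v` maximizes her expected
utility `v·Σ_j ω_j p_j(b) − α(b)` by choosing `b = v`. -/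
theorem equilibrium_group_specific_prizes (n : ℕ) (hn : 2 ≤ n)
    (μ : ℝ) (hμ : μ ∈ Set.Ioc (0:ℝ) 1) (F f : ℝ → ℝ)
    (hmono : StrictMonoOn F (Set.Icc (0:ℝ) 1))
    (hF0 : F 0 = 0) (hF1 : F 1 = 1)
    (hderiv : ∀ v ∈ Set.Icc (0:ℝ) 1, HasDerivWithinAt F (f v) (Set.Icc (0:ℝ) 1) v)
    (hcont : ContinuousOn f (Set.Icc (0:ℝ) 1))
    (ω : ℕ → ℝ)
    (hω : ∀ j, 1 ≤ j → j < n → ω (j+1) ≤ ω j) (hωn : 0 ≤ ω n) :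
    ∀ v ∈ Set.Icc (0:ℝ) 1, ∀ b ∈ Set.Icc (0:ℝ) 1,
      v * (∑ j ∈ Finset.Icc 1 n, ω j * winProb (fun y => (1-μ) + μ * F y) n j b)
          - eqStrategy (fun y => (1-μ) + μ * F y) (fun y => μ * f y) n ω b
        ≤ v * (∑ j ∈ Finset.Icc 1 n, ω j * winProb (fun y => (1-μ) + μ * F y) n j v)
          - eqStrategy (fun y => (1-μ) + μ * F y) (fun y => μ * f y) n ω v := by
  obtain ⟨hμ0, hμ1⟩ := hμ
  intro v hv b hb
  set H : ℝ → ℝ := fun y => (1-μ) + μ * F y with hHdef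
  set h : ℝ → ℝ := fun y => μ * f y with hhdef
  have hFmem : ∀ x ∈ Set.Icc (0:ℝ) 1, F x ∈ Set.Icc (0:ℝ) 1 := by
    intro x hx
    constructor
    · rw [← hF0]
      exact hmono.monotoneOn (Set.left_mem_Icc.2 (by norm_num)) hx hx.1
    · rw [← hF1]
      exact hmono.monotoneOn hx (Set.right_mem_Icc.2 (by norm_num)) hx.2
  have hHmem : ∀ x ∈ Set.Icc (0:ℝ) 1, H x ∈ Set.Icc (0:ℝ) 1 := by
    intro x hx
    obtain ⟨h1, h2⟩ := hFmem x hx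
    constructor
    · simp only [hHdef]; nlinarith
    · simp only [hHdef]; nlinarith
  have hfnn := aux_f_nonneg F f hmono hderiv
  have hhnn : ∀ x ∈ Set.Icc (0:ℝ) 1, 0 ≤ h x := fun x hx => mul_nonneg hμ0.le (hfnn x hx)
  have hHd : ∀ x ∈ Set.Icc (0:ℝ) 1, HasDerivWithinAt H (h x) (Set.Icc (0:ℝ) 1) x :=
    fun x hx => ((hderiv x hx).const_mul μ).const_add (1-μ)
  have hFc : ContinuousOn F (Set.Icc (0:ℝ) 1) := fun x hx => (hderiv x hx).continuousWithinAt
  have hHc : ContinuousOn H (Set.Icc (0:ℝ) 1) := continuousOn_const.add (continuousOn_const.mul hFc)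
  have hhc : ContinuousOn h (Set.Icc (0:ℝ) 1) := continuousOn_const.mul hcont
  have hOc : ∀ j : ℕ, ContinuousOn (fun y => orderDensity H h (n-1) j y) (Set.Icc (0:ℝ) 1) := by
    intro j
    simp only [orderDensity]
    exact ((continuousOn_const.mul (hHc.pow _)).mul ((continuousOn_const.sub hHc).pow _)).mul hhc
  have hOnn : ∀ (j : ℕ) (y : ℝ), y ∈ Set.Icc (0:ℝ) 1 → 0 ≤ orderDensity H h (n-1) j y := by
    intro j y hy
    obtain ⟨h1, h2⟩ := hHmem y hy
    have c0 : 0 ≤ (((n-1)! : ℝ)) / (((j-1)! : ℝ) * (((n-1)-j)! : ℝ)) := by positivity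
    exact mul_nonneg (mul_nonneg (mul_nonneg c0 (pow_nonneg h1 _))
      (pow_nonneg (by linarith) _)) (hhnn y hy)
  set g : ℝ → ℝ := fun y => ∑ j ∈ Finset.Icc 1 (n-1),
    (ω j - ω (j+1)) * orderDensity H h (n-1) j y with hgdef
  have hgc : ContinuousOn g (Set.Icc (0:ℝ) 1) := by
    apply continuousOn_finset_sum
    intro j _
    exact continuousOn_const.mul (hOc j)
  have hgnn : ∀ y ∈ Set.Icc (0:ℝ) 1, 0 ≤ g y := by
    intro y hy
    apply Finset.sum_nonneg
    intro j hj
    simp only [Finset.mem_Icc] at hj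
    exact mul_nonneg (sub_nonneg.2 (hω j hj.1 (by omega))) (hOnn j y hy)
  set P : ℝ → ℝ := fun c => ∑ j ∈ Finset.Icc 1 n, ω j * winProb H n j c with hPdef
  have hPd : ∀ x ∈ Set.Icc (0:ℝ) 1, HasDerivWithinAt P (g x) (Set.Icc (0:ℝ) 1) x := by
    intro x hx
    have hsum := HasDerivWithinAt.fun_sum
      (fun j (_ : j ∈ Finset.Icc 1 n) =>
        (aux_deriv_winProb n j H h x (Set.Icc (0:ℝ) 1) (hHd x hx)).const_mul (ω j))
    show HasDerivWithinAt P (∑ j ∈ Finset.Icc 1 (n-1),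
      (ω j - ω (j+1)) * orderDensity H h (n-1) j x) (Set.Icc (0:ℝ) 1) x
    rw [← aux_sum_identity n hn ω H h x]
    exact hsum
  -- FTC
  have hPI : ∀ a c : ℝ, a ∈ Set.Icc (0:ℝ) 1 → c ∈ Set.Icc (0:ℝ) 1 → a ≤ c →
      P c - P a = ∫ y in a..c, g y := by
    intro a c ha hc hac
    have hsub : Set.Icc a c ⊆ Set.Icc (0:ℝ) 1 := Set.Icc_subset_Icc ha.1 hc.2
    have hPc : ContinuousOn P (Set.Icc a c) :=
      fun x hx => ((hPd x (hsub hx)).continuousWithinAt).mono hsub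
    have hder : ∀ x ∈ Set.Ioo a c, HasDerivWithinAt P (g x) (Set.Ioi x) x := by
      intro x hx
      have hx1 : x ∈ Set.Icc (0:ℝ) 1 := hsub (Set.Ioo_subset_Icc_self hx)
      have hnbd : Set.Icc (0:ℝ) 1 ∈ 𝓝 x :=
        Icc_mem_nhds (lt_of_le_of_lt ha.1 hx.1) (lt_of_lt_of_le hx.2 hc.2)
      exact ((hPd x hx1).hasDerivAt hnbd).hasDerivWithinAt
    have hint : IntervalIntegrable g MeasureTheory.volume a c := by
      apply ContinuousOn.intervalIntegrable
      apply hgc.mono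
      rw [Set.uIcc_of_le hac]
      exact hsub
    exact (intervalIntegral.integral_eq_sub_of_hasDeriv_right_of_le hac hPc hder hint).symm
  have hPI' : P v - P b = ∫ y in b..v, g y := by
    rcases le_total b v with hbv | hvb
    · exact hPI b v hb hv hbv
    · have := hPI v b hv hb hvb
      rw [intervalIntegral.integral_symm v b]
      linarith
  -- interval integrability helpers
  have hsubI : ∀ a c : ℝ, a ∈ Set.Icc (0:ℝ) 1 → c ∈ Set.Icc (0:ℝ) 1 →
      Set.uIcc a c ⊆ Set.Icc (0:ℝ) 1 := by
    intro a c ha hc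
    exact Set.uIcc_subset_Icc ha hc
  have h0mem : (0:ℝ) ∈ Set.Icc (0:ℝ) 1 := by norm_num
  have hOint : ∀ (j : ℕ) (a c : ℝ), a ∈ Set.Icc (0:ℝ) 1 → c ∈ Set.Icc (0:ℝ) 1 →
      IntervalIntegrable (fun y => y * orderDensity H h (n-1) j y) MeasureTheory.volume a c := by
    intro j a c ha hc
    exact (continuousOn_id.mul ((hOc j).mono (hsubI a c ha hc))).intervalIntegrable
  have hα : eqStrategy H h n ω v - eqStrategy H h n ω b
      = ∑ j ∈ Finset.Icc 1 (n-1), (ω j - ω (j+1)) * ∫ y in b..v, y * orderDensity H h (n-1) j y := by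
    rw [eqStrategy, eqStrategy, ← Finset.sum_sub_distrib]
    refine Finset.sum_congr rfl ?_
    intro j _
    rw [← mul_sub]
    congr 1
    exact intervalIntegral.integral_interval_sub_left (hOint j 0 v h0mem hv) (hOint j 0 b h0mem hb)
  have hα2 : eqStrategy H h n ω v - eqStrategy H h n ω b = ∫ y in b..v, y * g y := by
    rw [hα]
    have hfun : (fun y => y * g y) = fun y => ∑ j ∈ Finset.Icc 1 (n-1),
        (ω j - ω (j+1)) * (y * orderDensity H h (n-1) j y) := by
      funext y
      rw [hgdef]
      rw [Finset.mul_sum]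
      exact Finset.sum_congr rfl (fun j _ => by ring)
    rw [hfun, intervalIntegral.integral_finset_sum]
    · refine Finset.sum_congr rfl ?_
      intro j _
      rw [intervalIntegral.integral_const_mul]
    · intro j _
      exact (hOint j b v hb hv).const_mul _
  have hgint : IntervalIntegrable g MeasureTheory.volume b v :=
    (hgc.mono (hsubI b v hb hv)).intervalIntegrable
  have hygint : IntervalIntegrable (fun y => y * g y) MeasureTheory.volume b v :=
    (continuousOn_id.mul (hgc.mono (hsubI b v hb hv))).intervalIntegrable
  have hvPb : v * P v - eqStrategy H h n ω v - (v * P b - eqStrategy H h n ω b)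
      = ∫ y in b..v, (v - y) * g y := by
    have h1 : v * P v - eqStrategy H h n ω v - (v * P b - eqStrategy H h n ω b)
        = v * (P v - P b) - (eqStrategy H h n ω v - eqStrategy H h n ω b) := by ring
    rw [h1, hPI', hα2, ← intervalIntegral.integral_const_mul,
      ← intervalIntegral.integral_sub (hgint.const_mul v) hygint]
    exact intervalIntegral.integral_congr (fun y _ => by ring)
  rw [← sub_nonneg]
  show 0 ≤ v * P v - eqStrategy H h n ω v - (v * P b - eqStrategy H h n ω b)
  rw [hvPb]
  rcases le_total b v with hbv | hvb
  · apply intervalIntegral.integral_nonneg hbv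
    intro y hy
    have hyI : y ∈ Set.Icc (0:ℝ) 1 := (Set.Icc_subset_Icc hb.1 hv.2) hy
    exact mul_nonneg (sub_nonneg.2 hy.2) (hgnn y hyI)
  · rw [intervalIntegral.integral_symm v b]
    have hpos : 0 ≤ ∫ y in v..b, (y - v) * g y := by
      apply intervalIntegral.integral_nonneg hvb
      intro y hy
      have hyI : y ∈ Set.Icc (0:ℝ) 1 := (Set.Icc_subset_Icc hv.1 hb.2) hy
      exact mul_nonneg (sub_nonneg.2 hy.1) (hgnn y hyI)
    have hneg : ∫ y in v..b, (v - y) * g y = - ∫ y in v..b, (y - v) * g y := by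
      rw [← intervalIntegral.integral_neg]
      exact intervalIntegral.integral_congr (fun y _ => by ring)
    rw [hneg]
    linarith
end

section
/- (Theorem 4: optimal contest with general prizes only.) Let n ≥ 2, μ ∈ [0,1], let F, G : [0,1] → [0,1] be continuously differentiable, strictly increasing, with F(0) = G(0) = 0, F(1) = G(1) = 1, and derivatives f, g. Set H = μF + (1−μ)G with derivative h, and f^H_{n−1,j}(y) = ((n−1)!/((j−1)!(n−1−j)!)) H(y)^{n−1−j} (1−H(y))^{j−1} h(y). For a prize vector w = (w_1, …, w_n) with w_1 ≥ … ≥ w_n ≥ 0 and Σ_j w_j ≤ 1, define α_w(v) = Σ_{j=1}^{n−1} (w_j − w_{j+1}) ∫_0^v y f^H_{n−1,j}(y) dy and J(w) = ∫_0^1 α_w(v) f(v) dv. Let k* ∈ argmax_{j ∈ {1,…,n−1}} (1/j) ∫_0^1 y (1−F(y)) f^H_{n−1,j}(y) dy. Then the prize vector w* with w*_j = 1/k* for j ≤ k* and w*_j = 0 for j > k* satisfies J(w*) ≥ J(w) for every feasible prize vector w. -/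
open scoped Nat

/-- Designer objective: expected equilibrium output of a target-group agent,
`J(w) = ∫_0^1 α_w(v) f(v) dv`. -/
noncomputable def designerObj (H h f : ℝ → ℝ) (n : ℕ) (w : ℕ → ℝ) : ℝ :=
  ∫ v in (0:ℝ)..1, eqStrategy H h n w v * f v

open MeasureTheory intervalIntegral Set

/-- Derivative (within `[0,1]`) of a monotone function is nonnegative. -/
lemma aux_deriv_nonneg {F : ℝ → ℝ} {d y : ℝ} (hm : MonotoneOn F (Set.Icc 0 1))
    (hy : y ∈ Set.Icc (0:ℝ) 1) (hd : HasDerivWithinAt F d (Set.Icc 0 1) y) : 0 ≤ d := by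
  rw [hasDerivWithinAt_iff_tendsto_slope] at hd
  have hne : (nhdsWithin y (Set.Icc (0:ℝ) 1 \ {y})).NeBot := by
    rw [← mem_closure_iff_nhdsWithin_neBot]
    rcases lt_or_eq_of_le hy.2 with h1 | h1
    · refine closure_mono (show Set.Ioc y 1 ⊆ Set.Icc 0 1 \ {y} from ?_) ?_
      · intro t ht
        exact ⟨⟨le_trans hy.1 ht.1.le, ht.2⟩, (ne_of_gt ht.1)⟩
      · rw [closure_Ioc h1.ne]
        exact ⟨le_refl y, h1.le⟩
    · refine closure_mono (show Set.Ico 0 1 ⊆ Set.Icc 0 1 \ {y} from ?_) ?_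
      · intro t ht
        subst h1
        exact ⟨⟨ht.1, ht.2.le⟩, ne_of_lt ht.2⟩
      · subst h1
        rw [closure_Ico one_ne_zero.symm]
        exact ⟨hy.1, le_refl _⟩
    
  refine ge_of_tendsto hd ?_
  refine eventually_nhdsWithin_of_forall ?_
  intro t ht
  rcases lt_or_gt_of_ne ht.2 with h | h
  · have h1 : F t ≤ F y := hm ht.1 hy h.le
    have h2 : t - y < 0 := by linarith
    rw [slope_def_field]
    rw [div_nonneg_iff]
    exact Or.inr ⟨by linarith, h2.le⟩
  · have h1 : F y ≤ F t := hm hy ht.1 h.le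
    have h2 : (0:ℝ) < t - y := by linarith
    rw [slope_def_field]
    exact div_nonneg (by linarith) h2.le

/-- FTC-1 for a continuous integrand. -/
lemma aux_primitive_hasDerivAt {Φ : ℝ → ℝ} (hΦ : Continuous Φ) (v : ℝ) :
    HasDerivAt (fun u => ∫ y in (0:ℝ)..u, Φ y) (Φ v) v :=
  integral_hasDerivAt_right (hΦ.intervalIntegrable _ _)
    (hΦ.stronglyMeasurableAtFilter _ _) hΦ.continuousAt

lemma aux_primitive_continuous {Φ : ℝ → ℝ} (hΦ : Continuous Φ) :
    Continuous (fun u => ∫ y in (0:ℝ)..u, Φ y) :=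
  Differentiable.continuous (fun v => (aux_primitive_hasDerivAt hΦ v).differentiableAt)

/-- Integration by parts identity. -/
lemma aux_parts {Φ Fb fb : ℝ → ℝ} (hΦ : Continuous Φ) (hFb : Continuous Fb) (hfb : Continuous fb)
    (hF1 : Fb 1 = 1)
    (hderiv : ∀ v ∈ Set.Ioo (0:ℝ) 1, HasDerivAt Fb (fb v) v) :
    ∫ v in (0:ℝ)..1, (∫ y in (0:ℝ)..v, Φ y) * fb v = ∫ y in (0:ℝ)..1, Φ y * (1 - Fb y) := by
  set A : ℝ → ℝ := fun u => ∫ y in (0:ℝ)..u, Φ y with hA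
  have hAc : Continuous A := aux_primitive_continuous hΦ
  have hP' : Continuous (fun v => Φ v * (Fb v - 1) + A v * fb v) :=
    ((hΦ.mul (hFb.sub continuous_const)).add (hAc.mul hfb))
  have hftc : ∫ v in (0:ℝ)..1, (Φ v * (Fb v - 1) + A v * fb v) =
      A 1 * (Fb 1 - 1) - A 0 * (Fb 0 - 1) := by
    refine integral_eq_sub_of_hasDeriv_right_of_le zero_le_one
      ((hAc.mul (hFb.sub continuous_const)).continuousOn) (fun x hx => ?_)
      (hP'.intervalIntegrable _ _)
    exact (((aux_primitive_hasDerivAt hΦ x).mul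
      ((hderiv x hx).sub_const 1))).hasDerivWithinAt
  rw [hF1] at hftc
  have hA0 : A 0 = 0 := integral_same
  rw [hA0] at hftc
  simp only [sub_self, mul_zero, zero_mul, sub_zero] at hftc
  have hadd : ∫ v in (0:ℝ)..1, (Φ v * (Fb v - 1) + A v * fb v) =
      (∫ v in (0:ℝ)..1, Φ v * (Fb v - 1)) + ∫ v in (0:ℝ)..1, A v * fb v :=
    integral_add ((hΦ.mul (hFb.sub continuous_const)).intervalIntegrable _ _)
      ((hAc.mul hfb).intervalIntegrable _ _)
  have : (∫ v in (0:ℝ)..1, A v * fb v) = - ∫ v in (0:ℝ)..1, Φ v * (Fb v - 1) := by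
    rw [hadd] at hftc; linarith
  rw [this, ← intervalIntegral.integral_neg]
  refine intervalIntegral.integral_congr (fun v _ => ?_)
  ring

/-- Telescoping identity. -/
lemma aux_telescope (w : ℕ → ℝ) (m : ℕ) :
    ∑ j ∈ Finset.Icc 1 m, (j:ℝ) * (w j - w (j+1))
      = (∑ j ∈ Finset.Icc 1 (m+1), w j) - (m+1) * w (m+1) := by
  induction m with
  | zero => simp
  | succ m ih =>
    rw [Finset.sum_Icc_succ_top (Nat.succ_le_succ (Nat.zero_le m)) (fun j => (j:ℝ) * (w j - w (j+1))), ih,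
      Finset.sum_Icc_succ_top (Nat.succ_le_succ (Nat.zero_le (m+1))) w]
    push_cast
    ring

/-- Theorem 4: in a contest with general prizes only, with population ability
distribution `H = μF + (1−μ)G`, if `k* ∈ argmax_{1 ≤ j ≤ n−1} (1/j)∫_0^1 y(1−F(y)) f^H_{n−1,j}(y) dy`,
then the prize vector awarding `1/k*` to the top `k*` ranks maximizes the expected
target-group output over all feasible prize vectors `w_1 ≥ … ≥ w_n ≥ 0`, `Σ_j w_j ≤ 1`. -/
theorem optimal_general_contest (n : ℕ) (hn : 2 ≤ n)
    (μ : ℝ) (hμ : μ ∈ Set.Icc (0:ℝ) 1) (F f G g : ℝ → ℝ)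
    (hFmono : StrictMonoOn F (Set.Icc (0:ℝ) 1))
    (hF0 : F 0 = 0) (hF1 : F 1 = 1)
    (hFderiv : ∀ v ∈ Set.Icc (0:ℝ) 1, HasDerivWithinAt F (f v) (Set.Icc (0:ℝ) 1) v)
    (hfcont : ContinuousOn f (Set.Icc (0:ℝ) 1))
    (hGmono : StrictMonoOn G (Set.Icc (0:ℝ) 1))
    (hG0 : G 0 = 0) (hG1 : G 1 = 1)
    (hGderiv : ∀ v ∈ Set.Icc (0:ℝ) 1, HasDerivWithinAt G (g v) (Set.Icc (0:ℝ) 1) v)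
    (hgcont : ContinuousOn g (Set.Icc (0:ℝ) 1))
    (kstar : ℕ) (hk1 : 1 ≤ kstar) (hkn : kstar ≤ n - 1)
    (hargmax : ∀ j ∈ Finset.Icc 1 (n-1),
      (1/(j:ℝ)) * ∫ y in (0:ℝ)..1, y * (1 - F y) *
          orderDensity (fun x => μ * F x + (1-μ) * G x)
            (fun x => μ * f x + (1-μ) * g x) (n-1) j y
        ≤ (1/(kstar:ℝ)) * ∫ y in (0:ℝ)..1, y * (1 - F y) *
          orderDensity (fun x => μ * F x + (1-μ) * G x)
            (fun x => μ * f x + (1-μ) * g x) (n-1) kstar y) :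
    ∀ w : ℕ → ℝ,
      (∀ j, 1 ≤ j → j < n → w (j+1) ≤ w j) → 0 ≤ w n →
      (∑ j ∈ Finset.Icc 1 n, w j) ≤ 1 →
      designerObj (fun x => μ * F x + (1-μ) * G x) (fun x => μ * f x + (1-μ) * g x) f n w
        ≤ designerObj (fun x => μ * F x + (1-μ) * G x) (fun x => μ * f x + (1-μ) * g x) f n
            (fun j => if j ≤ kstar then (kstar : ℝ)⁻¹ else 0) := by

  intro w hwmono hwn hwsum
  set HH : ℝ → ℝ := fun x => μ * F x + (1-μ) * G x with hHHdef
  set hh : ℝ → ℝ := fun x => μ * f x + (1-μ) * g x with hhhdef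
  -- clamp to [0,1]
  set c : ℝ → ℝ := fun x => max 0 (min 1 x) with hcdef
  have hccont : Continuous c := continuous_const.max (continuous_const.min continuous_id)
  have hcmem : ∀ x, c x ∈ Set.Icc (0:ℝ) 1 :=
    fun x => ⟨le_max_left _ _, max_le zero_le_one (min_le_left _ _)⟩
  have hcid : ∀ x ∈ Set.Icc (0:ℝ) 1, c x = x := by
    intro x hx
    simp only [hcdef]
    rw [min_eq_right hx.2, max_eq_right hx.1]
  -- continuous extensions
  have hFcont : ContinuousOn F (Set.Icc 0 1) :=
    fun v hv => (hFderiv v hv).continuousWithinAt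
  have hGcont : ContinuousOn G (Set.Icc 0 1) :=
    fun v hv => (hGderiv v hv).continuousWithinAt
  set FC : ℝ → ℝ := F ∘ c with hFCdef
  set GC : ℝ → ℝ := G ∘ c with hGCdef
  set fC : ℝ → ℝ := f ∘ c with hfCdef
  set gC : ℝ → ℝ := g ∘ c with hgCdef
  have hFCc : Continuous FC := hFcont.comp_continuous hccont hcmem
  have hGCc : Continuous GC := hGcont.comp_continuous hccont hcmem
  have hfCc : Continuous fC := hfcont.comp_continuous hccont hcmem
  have hgCc : Continuous gC := hgcont.comp_continuous hccont hcmem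
  have hFCeq : ∀ x ∈ Set.Icc (0:ℝ) 1, FC x = F x := by
    intro x hx; simp only [hFCdef, Function.comp_apply, hcid x hx]
  have hGCeq : ∀ x ∈ Set.Icc (0:ℝ) 1, GC x = G x := by
    intro x hx; simp only [hGCdef, Function.comp_apply, hcid x hx]
  have hfCeq : ∀ x ∈ Set.Icc (0:ℝ) 1, fC x = f x := by
    intro x hx; simp only [hfCdef, Function.comp_apply, hcid x hx]
  have hgCeq : ∀ x ∈ Set.Icc (0:ℝ) 1, gC x = g x := by
    intro x hx; simp only [hgCdef, Function.comp_apply, hcid x hx]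
  set HC : ℝ → ℝ := fun x => μ * FC x + (1-μ) * GC x with hHCdef
  set hC : ℝ → ℝ := fun x => μ * fC x + (1-μ) * gC x with hhCdef
  have hHCc : Continuous HC := (continuous_const.mul hFCc).add (continuous_const.mul hGCc)
  have hhCc : Continuous hC := (continuous_const.mul hfCc).add (continuous_const.mul hgCc)
  have hHCeq : ∀ x ∈ Set.Icc (0:ℝ) 1, HC x = HH x := by
    intro x hx; simp only [hHCdef, hHHdef, hFCeq x hx, hGCeq x hx]
  have hhCeq : ∀ x ∈ Set.Icc (0:ℝ) 1, hC x = hh x := by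
    intro x hx; simp only [hhCdef, hhhdef, hfCeq x hx, hgCeq x hx]
  have hodeq : ∀ (j : ℕ) (x : ℝ), x ∈ Set.Icc (0:ℝ) 1 →
      orderDensity HC hC (n-1) j x = orderDensity HH hh (n-1) j x := by
    intro j x hx
    unfold orderDensity
    rw [hHCeq x hx, hhCeq x hx]
  set Φ : ℕ → ℝ → ℝ := fun j y => y * orderDensity HC hC (n-1) j y with hΦdef
  have hΦc : ∀ j, Continuous (Φ j) := by
    intro j
    simp only [hΦdef]
    unfold orderDensity
    exact continuous_id.mul
      (((continuous_const.mul (hHCc.pow _)).mul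
        ((continuous_const.sub hHCc).pow _)).mul hhCc)
  -- derivative of FC on the interior
  have hFC1 : FC 1 = 1 := by rw [hFCeq 1 ⟨zero_le_one, le_refl 1⟩, hF1]
  have hFCd : ∀ v ∈ Set.Ioo (0:ℝ) 1, HasDerivAt FC (fC v) v := by
    intro v hv
    have hmem : v ∈ Set.Icc (0:ℝ) 1 := ⟨hv.1.le, hv.2.le⟩
    have h1 : HasDerivAt F (f v) v :=
      (hFderiv v hmem).hasDerivAt (Icc_mem_nhds hv.1 hv.2)
    have h2 : FC =ᶠ[nhds v] F :=
      Filter.eventuallyEq_of_mem (Icc_mem_nhds hv.1 hv.2) (fun y hy => hFCeq y hy)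
    rw [hfCeq v hmem]
    exact h1.congr_of_eventuallyEq h2
  -- the key formula
  have key : ∀ w' : ℕ → ℝ, designerObj HH hh f n w'
      = ∑ j ∈ Finset.Icc 1 (n-1), (w' j - w' (j+1)) *
          ∫ y in (0:ℝ)..1, y * (1 - F y) * orderDensity HH hh (n-1) j y := by
    intro w'
    have step1 : designerObj HH hh f n w'
        = ∫ v in (0:ℝ)..1,
            (∑ j ∈ Finset.Icc 1 (n-1), (w' j - w' (j+1)) * ∫ y in (0:ℝ)..v, Φ j y) * fC v := by
      unfold designerObj
      refine intervalIntegral.integral_congr (fun v hv => ?_)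
      rw [Set.uIcc_of_le zero_le_one] at hv
      have hinner : ∀ j, (∫ y in (0:ℝ)..v, y * orderDensity HH hh (n-1) j y)
          = ∫ y in (0:ℝ)..v, Φ j y := by
        intro j
        refine intervalIntegral.integral_congr (fun y hy => ?_)
        rw [Set.uIcc_of_le hv.1] at hy
        have hy1 : y ∈ Set.Icc (0:ℝ) 1 := ⟨hy.1, hy.2.trans hv.2⟩
        simp only [hΦdef, hodeq j y hy1]
      unfold eqStrategy
      rw [hfCeq v hv]
      congr 1
      exact Finset.sum_congr rfl (fun j _ => by rw [hinner j])
    have step2 : (fun v => (∑ j ∈ Finset.Icc 1 (n-1),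
          (w' j - w' (j+1)) * ∫ y in (0:ℝ)..v, Φ j y) * fC v)
        = fun v => ∑ j ∈ Finset.Icc 1 (n-1),
            (w' j - w' (j+1)) * ((∫ y in (0:ℝ)..v, Φ j y) * fC v) := by
      funext v
      rw [Finset.sum_mul]
      exact Finset.sum_congr rfl (fun j _ => mul_assoc _ _ _)
    rw [step1, step2, intervalIntegral.integral_finset_sum
      (fun j _ => (show IntervalIntegrable (fun v => (w' j - w' (j+1)) *
          ((∫ y in (0:ℝ)..v, Φ j y) * fC v)) volume 0 1 from (continuous_const.mul
        ((aux_primitive_continuous (hΦc j)).mul hfCc)).intervalIntegrable _ _))]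
    refine Finset.sum_congr rfl (fun j _ => ?_)
    rw [intervalIntegral.integral_const_mul]
    congr 1
    rw [aux_parts (hΦc j) hFCc hfCc hFC1 hFCd]
    refine intervalIntegral.integral_congr (fun y hy => ?_)
    rw [Set.uIcc_of_le zero_le_one] at hy
    simp only [hΦdef, hodeq j y hy, hFCeq y hy]
    ring
  -- nonnegativity facts
  have hfnn : ∀ y ∈ Set.Icc (0:ℝ) 1, 0 ≤ f y :=
    fun y hy => aux_deriv_nonneg hFmono.monotoneOn hy (hFderiv y hy)
  have hgnn : ∀ y ∈ Set.Icc (0:ℝ) 1, 0 ≤ g y :=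
    fun y hy => aux_deriv_nonneg hGmono.monotoneOn hy (hGderiv y hy)
  have h01 : (0:ℝ) ∈ Set.Icc (0:ℝ) 1 := ⟨le_refl 0, zero_le_one⟩
  have h11 : (1:ℝ) ∈ Set.Icc (0:ℝ) 1 := ⟨zero_le_one, le_refl 1⟩
  have hF01 : ∀ y ∈ Set.Icc (0:ℝ) 1, F y ∈ Set.Icc (0:ℝ) 1 := by
    intro y hy
    constructor
    · rw [← hF0]; exact hFmono.monotoneOn h01 hy hy.1
    · rw [← hF1]; exact hFmono.monotoneOn hy h11 hy.2
  have hG01 : ∀ y ∈ Set.Icc (0:ℝ) 1, G y ∈ Set.Icc (0:ℝ) 1 := by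
    intro y hy
    constructor
    · rw [← hG0]; exact hGmono.monotoneOn h01 hy hy.1
    · rw [← hG1]; exact hGmono.monotoneOn hy h11 hy.2
  have hH01 : ∀ y ∈ Set.Icc (0:ℝ) 1, HH y ∈ Set.Icc (0:ℝ) 1 := by
    intro y hy
    have h1 := hF01 y hy
    have h2 := hG01 y hy
    have e1 : μ * F y ≤ μ * 1 := mul_le_mul_of_nonneg_left h1.2 hμ.1
    have e2 : (1-μ) * G y ≤ (1-μ) * 1 := mul_le_mul_of_nonneg_left h2.2 (by linarith [hμ.2])
    constructor
    · simp only [hHHdef]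
      exact add_nonneg (mul_nonneg hμ.1 h1.1) (mul_nonneg (by linarith [hμ.2]) h2.1)
    · simp only [hHHdef]
      nlinarith
  have hodnn : ∀ (j : ℕ) (y : ℝ), y ∈ Set.Icc (0:ℝ) 1 →
      0 ≤ y * (1 - F y) * orderDensity HH hh (n-1) j y := by
    intro j y hy
    have hFy := hF01 y hy
    have hHy := hH01 y hy
    have hhy : 0 ≤ hh y := by
      simp only [hhhdef]
      exact add_nonneg (mul_nonneg hμ.1 (hfnn y hy))
        (mul_nonneg (by linarith [hμ.2]) (hgnn y hy))
    refine mul_nonneg (mul_nonneg hy.1 (by linarith [hFy.2])) ?_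
    unfold orderDensity
    refine mul_nonneg (mul_nonneg (mul_nonneg ?_ (pow_nonneg hHy.1 _))
      (pow_nonneg (by linarith [hHy.2]) _)) hhy
    exact div_nonneg (Nat.cast_nonneg _) (mul_nonneg (Nat.cast_nonneg _) (Nat.cast_nonneg _))
  have hBnn : 0 ≤ ∫ y in (0:ℝ)..1, y * (1 - F y) * orderDensity HH hh (n-1) kstar y :=
    intervalIntegral.integral_nonneg zero_le_one (fun y hy => hodnn kstar y hy)
  -- value at the candidate optimum
  have hkS : kstar ∈ Finset.Icc 1 (n-1) := Finset.mem_Icc.mpr ⟨hk1, hkn⟩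
  have hRHS : designerObj HH hh f n (fun j => if j ≤ kstar then (kstar : ℝ)⁻¹ else 0)
      = (kstar : ℝ)⁻¹ * ∫ y in (0:ℝ)..1, y * (1 - F y) * orderDensity HH hh (n-1) kstar y := by
    rw [key]
    rw [Finset.sum_eq_single_of_mem kstar hkS]
    · congr 1
      rw [if_pos (le_refl kstar), if_neg (Nat.not_succ_le_self kstar), sub_zero]
    · intro j hj hjne
      rcases lt_or_gt_of_ne hjne with h | h
      · rw [if_pos h.le, if_pos (Nat.succ_le_of_lt h), sub_self, zero_mul]
      · rw [if_neg (by omega), if_neg (by omega), sub_self, zero_mul]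
  -- the chain of inequalities
  rw [key w, hRHS]
  set Bk : ℝ := ∫ y in (0:ℝ)..1, y * (1 - F y) * orderDensity HH hh (n-1) kstar y with hBkdef
  have hck : 0 ≤ (kstar : ℝ)⁻¹ * Bk :=
    mul_nonneg (inv_nonneg.mpr (Nat.cast_nonneg _)) hBnn
  have hsum1 : ∑ j ∈ Finset.Icc 1 (n-1), (j:ℝ) * (w j - w (j+1)) ≤ 1 := by
    have htel := aux_telescope w (n-1)
    have hnm : n - 1 + 1 = n := by omega
    rw [hnm] at htel
    rw [htel]
    have hcast : ((n:ℝ) - 1 + 1) = (n:ℝ) := by ring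
    have hn1 : ((n-1 : ℕ):ℝ) = (n:ℝ) - 1 := by
      have : (1:ℕ) ≤ n := by omega
      push_cast [this]
      ring
    rw [hn1, hcast]
    have : 0 ≤ (n:ℝ) * w n := mul_nonneg (Nat.cast_nonneg _) hwn
    linarith
  calc ∑ j ∈ Finset.Icc 1 (n-1), (w j - w (j+1)) *
          ∫ y in (0:ℝ)..1, y * (1 - F y) * orderDensity HH hh (n-1) j y
      ≤ ∑ j ∈ Finset.Icc 1 (n-1), (w j - w (j+1)) * ((j:ℝ) * ((kstar : ℝ)⁻¹ * Bk)) := by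
        refine Finset.sum_le_sum (fun j hj => ?_)
        obtain ⟨hj1, hj2⟩ := Finset.mem_Icc.mp hj
        have hjn : j < n := by omega
        have hd : 0 ≤ w j - w (j+1) := sub_nonneg.mpr (hwmono j hj1 hjn)
        have hjpos : (0:ℝ) < (j:ℝ) := by exact_mod_cast Nat.pos_of_ne_zero (by omega)
        have harg := hargmax j hj
        have hBj : (∫ y in (0:ℝ)..1, y * (1 - F y) * orderDensity HH hh (n-1) j y)
            ≤ (j:ℝ) * ((kstar : ℝ)⁻¹ * Bk) := by
          have h2 : (j:ℝ) * ((1/(j:ℝ)) * ∫ y in (0:ℝ)..1,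
              y * (1 - F y) * orderDensity HH hh (n-1) j y)
              ≤ (j:ℝ) * ((1/(kstar:ℝ)) * Bk) :=
            mul_le_mul_of_nonneg_left harg hjpos.le
          rw [← mul_assoc, mul_one_div, div_self hjpos.ne', one_mul] at h2
          rw [one_div] at h2
          exact h2
        exact mul_le_mul_of_nonneg_left hBj hd
    _ = (∑ j ∈ Finset.Icc 1 (n-1), (j:ℝ) * (w j - w (j+1))) * ((kstar : ℝ)⁻¹ * Bk) := by
        rw [Finset.sum_mul]
        exact Finset.sum_congr rfl (fun j _ => by ring)
    _ ≤ 1 * ((kstar : ℝ)⁻¹ * Bk) := mul_le_mul_of_nonneg_right hsum1 hck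
    _ = (kstar : ℝ)⁻¹ * Bk := one_mul _
end

section
/- (Example 1, argmax claim.) Let n ≥ 3 and for 1 ≤ j ≤ n−1 define g(j) = (1/j) ∫_0^1 y (1−y)^{n−1} · ((n−1)!/((j−1)!(n−1−j)!)) y^{n−1−j} (1−y)^{j−1} dy. Then g(j) = (n−1)! (n−j) (n+j−2)! / (j! (2n−1)!), and g attains its maximum over j ∈ {1, …, n−1} uniquely at j = n−2. -/
open scoped Nat

lemma betaNat (a b : ℕ) :
    ∫ x in (0:ℝ)..1, x ^ a * (1 - x) ^ b = (a ! : ℝ) * (b ! : ℝ) / ((a + b + 1)! : ℝ) := by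
  induction b generalizing a with
  | zero => simp [integral_pow, Nat.factorial_succ]; field_simp
  | succ b ih =>
    have hderiv : ∀ x : ℝ, HasDerivAt (fun x : ℝ => x ^ (a+1) * (1 - x) ^ (b+1))
        ((a+1 : ℝ) * x ^ a * (1-x)^(b+1) - (b+1 : ℝ) * (x ^ (a+1) * (1-x)^b)) x := by
      intro x
      have h1 : HasDerivAt (fun x : ℝ => x ^ (a+1)) ((a+1 : ℝ) * x ^ a) x := by
        simpa using hasDerivAt_pow (a+1) x
      have h2 : HasDerivAt (fun x : ℝ => (1 - x) ^ (b+1))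
          (((b+1 : ℝ) * (1-x)^b) * (-1)) x := by
        have := ((hasDerivAt_id x).const_sub 1).fun_pow (b+1)
        simpa using this
      have := h1.fun_mul h2
      refine this.congr_deriv ?_
      ring
    have hint : ∫ x in (0:ℝ)..1,
        ((a+1 : ℝ) * x ^ a * (1-x)^(b+1) - (b+1 : ℝ) * (x ^ (a+1) * (1-x)^b)) = 0 := by
      rw [intervalIntegral.integral_eq_sub_of_hasDerivAt (fun x _ => hderiv x)]
      · simp
      · apply Continuous.intervalIntegrable; fun_prop
    have i1 : IntervalIntegrable (fun x : ℝ => x ^ a * (1-x)^(b+1)) MeasureTheory.volume 0 1 := by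
      apply Continuous.intervalIntegrable; fun_prop
    have i2 : IntervalIntegrable (fun x : ℝ => x ^ (a+1) * (1-x)^b) MeasureTheory.volume 0 1 := by
      apply Continuous.intervalIntegrable; fun_prop
    have hsplit : (a+1 : ℝ) * ∫ x in (0:ℝ)..1, x ^ a * (1-x)^(b+1)
        = (b+1 : ℝ) * ∫ x in (0:ℝ)..1, x ^ (a+1) * (1-x)^b := by
      have := intervalIntegral.integral_sub (i1.const_mul ((a:ℝ)+1)) (i2.const_mul ((b:ℝ)+1))
      rw [intervalIntegral.integral_const_mul, intervalIntegral.integral_const_mul] at this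
      have h2 : ∫ x in (0:ℝ)..1,
          ((a+1 : ℝ) * (x ^ a * (1-x)^(b+1)) - (b+1 : ℝ) * (x ^ (a+1) * (1-x)^b)) = 0 := by
        rw [← hint]; congr 1; funext x; ring
      rw [h2] at this
      linarith [this]
    have hpos : (0:ℝ) < (a+1 : ℝ) := by positivity
    have := ih (a+1)
    rw [show a+1+b+1 = a+(b+1)+1 by omega] at this
    rw [this] at hsplit
    have : (∫ x in (0:ℝ)..1, x ^ a * (1-x)^(b+1))
        = (b+1 : ℝ) / (a+1 : ℝ) * ((((a+1)! : ℝ) * (b ! : ℝ)) / ((a+(b+1)+1)! : ℝ)) := by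
      field_simp at hsplit ⊢
      linarith [hsplit]
    rw [this, Nat.factorial_succ (a), Nat.factorial_succ b]
    have hfa : ((a+(b+1)+1)! : ℝ) ≠ 0 := by positivity
    push_cast
    field_simp

noncomputable def exA (n j : ℕ) : ℝ := ((n:ℝ) - j) * ((n+j-2)! : ℝ) / (j ! : ℝ)

lemma exA_lt (n j : ℕ) (hn : 3 ≤ n) (h1 : 1 ≤ j) (h2 : j ≤ n-2)
    (hkey : ((n:ℝ)-j)*((j:ℝ)+1) < (((n:ℝ)-j)-1)*(((n:ℝ)+j)-1)) :
    exA n j < exA n (j+1) := by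
  have hF : (0:ℝ) < ((n+j-2)! : ℝ) := by positivity
  have hG : (0:ℝ) < (j ! : ℝ) := by positivity
  have hG1 : (0:ℝ) < ((j+1)! : ℝ) := by positivity
  rw [exA, exA, div_lt_div_iff₀ hG hG1]
  rw [show n+(j+1)-2 = (n+j-2)+1 by omega, Nat.factorial_succ ((n+j-2)), Nat.factorial_succ j]
  have ec : ((n+j-2 : ℕ):ℝ) = (n:ℝ) + j - 2 := by
    have h : (2:ℕ) ≤ n + j := by omega
    rw [Nat.cast_sub h]; push_cast; ring
  push_cast [ec]
  nlinarith [mul_lt_mul_of_pos_right hkey (mul_pos hF hG)]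

lemma exA_gt (n j : ℕ) (hn : 3 ≤ n) (h1 : 1 ≤ j) (h2 : j ≤ n-2)
    (hkey : (((n:ℝ)-j)-1)*(((n:ℝ)+j)-1) < ((n:ℝ)-j)*((j:ℝ)+1)) :
    exA n (j+1) < exA n j := by
  have hF : (0:ℝ) < ((n+j-2)! : ℝ) := by positivity
  have hG : (0:ℝ) < (j ! : ℝ) := by positivity
  have hG1 : (0:ℝ) < ((j+1)! : ℝ) := by positivity
  rw [exA, exA, div_lt_div_iff₀ hG1 hG]
  rw [show n+(j+1)-2 = (n+j-2)+1 by omega, Nat.factorial_succ ((n+j-2)), Nat.factorial_succ j]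
  have ec : ((n+j-2 : ℕ):ℝ) = (n:ℝ) + j - 2 := by
    have h : (2:ℕ) ≤ n + j := by omega
    rw [Nat.cast_sub h]; push_cast; ring
  push_cast [ec]
  nlinarith [mul_lt_mul_of_pos_right hkey (mul_pos hF hG)]

lemma exA_step (n j : ℕ) (hn : 3 ≤ n) (h1 : 1 ≤ j) (h2 : j + 1 ≤ n-2) :
    exA n j < exA n (j+1) := by
  apply exA_lt n j hn h1 (by omega)
  have hj3 : (j:ℝ) + 3 ≤ (n:ℝ) := by exact_mod_cast (by omega : j + 3 ≤ n)
  have hj1 : (1:ℝ) ≤ (j:ℝ) := by exact_mod_cast h1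
  nlinarith [mul_le_mul_of_nonneg_right (by linarith : (j:ℝ) ≤ (n:ℝ)-3)
    (by linarith : (0:ℝ) ≤ (n:ℝ)-1)]

lemma exA_last (n : ℕ) (hn : 3 ≤ n) : exA n (n-1) < exA n (n-2) := by
  have h : n - 1 = (n-2) + 1 := by omega
  rw [h]
  apply exA_gt n (n-2) hn (by omega) le_rfl
  have ec : ((n-2 : ℕ):ℝ) = (n:ℝ) - 2 := by
    rw [Nat.cast_sub (by omega)]; norm_num
  rw [ec]
  have h3 : (3:ℝ) ≤ (n:ℝ) := by exact_mod_cast hn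
  nlinarith

lemma exA_chain (n : ℕ) (hn : 3 ≤ n) :
    ∀ d j, 1 ≤ j → j + d = n - 2 → 1 ≤ d → exA n j < exA n (n-2) := by
  intro d
  induction d with
  | zero => intro j _ _ h; omega
  | succ d ih =>
    intro j h1 h2 _
    have hs := exA_step n j hn h1 (by omega)
    rcases Nat.eq_zero_or_pos d with h0 | hd
    · subst h0
      rw [show n - 2 = j + 1 by omega]
      exact hs
    · exact hs.trans (ih (j+1) (by omega) (by omega) hd)

/-- The objective of Example 1 when the unit budget is split equally among the top `j` prizes:
`g(j) = (1/j) ∫_0^1 y (1−y)^{n−1} f^{unif}_{n−1,j}(y) dy`, where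
`f^{unif}_{n−1,j}(y) = ((n−1)!/((j−1)!(n−1−j)!)) y^{n−1−j}(1−y)^{j−1}`. -/
noncomputable def exObj (n j : ℕ) : ℝ :=
  (1/(j:ℝ)) * ∫ y in (0:ℝ)..1,
    y * (1-y)^(n-1) * (((n-1)! : ℝ) / (((j-1)! : ℝ) * ((n-1-j)! : ℝ)) * y^(n-1-j) * (1-y)^(j-1))

lemma exObj_eq (n j : ℕ) (hn : 3 ≤ n) (h1 : 1 ≤ j) (h2 : j ≤ n - 1) :
    exObj n j = ((n-1)! : ℝ) * ((n:ℝ) - j) * ((n+j-2)! : ℝ) / ((j ! : ℝ) * ((2*n-1)! : ℝ)) := by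
  have hfun : ∀ y : ℝ,
      y * (1-y)^(n-1) * (((n-1)! : ℝ) / (((j-1)! : ℝ) * ((n-1-j)! : ℝ)) * y^(n-1-j) * (1-y)^(j-1))
      = ((n-1)! : ℝ) / (((j-1)! : ℝ) * ((n-1-j)! : ℝ)) * (y^(n-j) * (1-y)^(n+j-2)) := by
    intro y
    rw [show n - j = (n-1-j)+1 by omega, show n+j-2 = (n-1)+(j-1) by omega, pow_succ, pow_add]
    ring
  rw [exObj]
  simp only [hfun]
  rw [intervalIntegral.integral_const_mul, betaNat, show (n-j)+(n+j-2)+1 = 2*n-1 by omega]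
  have e1 : ((n-j)! : ℝ) = ((n:ℝ) - j) * ((n-1-j)! : ℝ) := by
    rw [show n - j = (n-1-j)+1 by omega, Nat.factorial_succ]
    push_cast [Nat.cast_sub (by omega : j ≤ n)]
    have : ((n-1-j : ℕ):ℝ) = (n:ℝ) - 1 - j := by
      rw [Nat.cast_sub (by omega : j ≤ n - 1), Nat.cast_sub (by omega : 1 ≤ n)]; push_cast; ring
    rw [this]; ring
  have e2 : (j ! : ℝ) = (j:ℝ) * ((j-1)! : ℝ) := by
    rw [show j = (j-1)+1 by omega, Nat.factorial_succ]
    push_cast [Nat.cast_sub (by omega : 1 ≤ j)]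
    simp [show j - 1 + 1 = j by omega]
  rw [e1, e2]
  have hj : (j:ℝ) ≠ 0 := by positivity
  have h1' : ((j-1)! : ℝ) ≠ 0 := by positivity
  have h2' : ((n-1-j)! : ℝ) ≠ 0 := by positivity
  have h3' : ((2*n-1)! : ℝ) ≠ 0 := by positivity
  field_simp

lemma exObj_eq_exA (n j : ℕ) (hn : 3 ≤ n) (h1 : 1 ≤ j) (h2 : j ≤ n - 1) :
    exObj n j = ((n-1)! : ℝ) / ((2*n-1)! : ℝ) * exA n j := by
  rw [exObj_eq n j hn h1 h2, exA]
  have hj : (j ! : ℝ) ≠ 0 := by positivity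
  have h3' : ((2*n-1)! : ℝ) ≠ 0 := by positivity
  field_simp

/-- Example 1, argmax claim: `g(j) = (n−1)!(n−j)(n+j−2)!/(j!(2n−1)!)` and `g`
attains its maximum over `{1,…,n−1}` uniquely at `j = n−2`. -/
theorem example_one_argmax (n : ℕ) (hn : 3 ≤ n) :
    (∀ j, 1 ≤ j → j ≤ n - 1 →
      exObj n j = ((n-1)! : ℝ) * ((n:ℝ) - j) * ((n+j-2)! : ℝ) / ((j ! : ℝ) * ((2*n-1)! : ℝ))) ∧
    ∀ j, 1 ≤ j → j ≤ n - 1 → j ≠ n - 2 → exObj n j < exObj n (n-2) := by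
  constructor
  · intro j h1 h2; exact exObj_eq n j hn h1 h2
  · intro j h1 h2 h3
    rw [exObj_eq_exA n j hn h1 h2, exObj_eq_exA n (n-2) hn (by omega) (by omega)]
    have hC : (0:ℝ) < ((n-1)! : ℝ) / ((2*n-1)! : ℝ) := by positivity
    apply mul_lt_mul_of_pos_left _ hC
    rcases Nat.lt_or_ge j (n-2) with h | h
    · exact exA_chain n hn (n-2-j) j h1 (by omega) (by omega)
    · have : j = n - 1 := by omega
      subst this
      exact exA_last n hn
end

section
/- (Appendix example, monotonicity and bound.) Let n ≥ 2 and define, for μ ∈ (0,1], Φ(μ) = ( (n−1) − (1−μ)(n+1) + (1−μ)^n (2(1−μ) + (n+1)μ) ) / ( n(n+1) μ ). Then Φ is nondecreasing on (0,1], Φ(μ) → 0 as μ → 0⁺, Φ(1) = (n−1)/(n(n+1)), and consequently Φ(μ) ≤ (n−1)/(n(n+1)) for all μ ∈ (0,1]. -/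
/-- Expected equilibrium output of a target-group agent under a target-group-specific
first prize of value `μ`, with uniform abilities:
`Φ(μ) = ((n−1) − (1−μ)(n+1) + (1−μ)^n (2(1−μ) + (n+1)μ)) / (n(n+1)μ)`. -/
noncomputable def PhiOut (n : ℕ) (μ : ℝ) : ℝ :=
  (((n:ℝ) - 1) - (1 - μ) * ((n:ℝ) + 1) + (1 - μ)^n * (2 * (1 - μ) + ((n:ℝ) + 1) * μ))
    / ((n:ℝ) * ((n:ℝ) + 1) * μ)

noncomputable def Qf (n : ℕ) (x : ℝ) : ℝ :=
  ((n:ℝ) - 1) * (1 + x^n) - 2 * ∑ k ∈ Finset.range (n-1), x^(k+1)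

lemma telescope (n : ℕ) (hn : 1 ≤ n) (x : ℝ) :
    (1 - x) * ∑ k ∈ Finset.range (n-1), x^(k+1) = x - x^n := by
  have h := Finset.sum_range_sub' (fun k => x^(k+1)) (n-1)
  have hn1 : n - 1 + 1 = n := Nat.succ_pred_eq_of_pos hn
  rw [hn1] at h
  calc (1 - x) * ∑ k ∈ Finset.range (n-1), x^(k+1)
      = ∑ k ∈ Finset.range (n-1), (x^(k+1) - x^(k+1+1)) := by
        rw [Finset.mul_sum]; exact Finset.sum_congr rfl (fun k _ => by ring)
    _ = x^(0+1) - x^n := h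
    _ = x - x^n := by rw [pow_one]

lemma phi_eq (n : ℕ) (hn : 1 ≤ n) {μ : ℝ} (hμ : μ ≠ 0) (hnn : ((n:ℝ) * ((n:ℝ)+1)) ≠ 0) :
    PhiOut n μ = Qf n (1-μ) / ((n:ℝ) * ((n:ℝ)+1)) := by
  have ht := telescope n hn (1-μ)
  unfold PhiOut Qf
  rw [div_eq_div_iff (by exact mul_ne_zero hnn hμ) hnn]
  linear_combination (2 * ((n:ℝ) * ((n:ℝ)+1))) * ht

lemma gauss (m : ℕ) : ∑ k ∈ Finset.range m, ((k:ℝ)+1) = m*(m+1)/2 := by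
  induction m with
  | zero => simp
  | succ m ih => rw [Finset.sum_range_succ, ih]; push_cast; ring

lemma Qf_anti (n : ℕ) (hn : 2 ≤ n) : AntitoneOn (Qf n) (Set.Icc (0:ℝ) 1) := by
  have hcast : ((n-1 : ℕ) : ℝ) = (n:ℝ) - 1 := by
    have : (1:ℕ) ≤ n := le_trans (by norm_num) hn
    push_cast [Nat.cast_pred (by omega : 0 < n)]; ring
  have hderiv : ∀ x : ℝ, HasDerivAt (Qf n)
      (((n:ℝ) - 1) * ((n:ℝ) * x^(n-1)) - 2 * ∑ k ∈ Finset.range (n-1), ((k:ℝ)+1) * x^k) x := by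
    intro x
    have h1 : HasDerivAt (fun x : ℝ => ((n:ℝ)-1) * (1 + x^n)) (((n:ℝ)-1) * ((n:ℝ) * x^(n-1))) x := by
      simpa using (((hasDerivAt_pow n x).const_add 1).const_mul ((n:ℝ)-1))
    have h2 : HasDerivAt (fun x : ℝ => 2 * ∑ k ∈ Finset.range (n-1), x^(k+1))
        (2 * ∑ k ∈ Finset.range (n-1), ((k:ℝ)+1) * x^k) x := by
      have : HasDerivAt (fun x : ℝ => ∑ k ∈ Finset.range (n-1), x^(k+1))
          (∑ k ∈ Finset.range (n-1), ((k:ℝ)+1) * x^k) x := by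
        apply HasDerivAt.fun_sum
        intro k _
        simpa using hasDerivAt_pow (k+1) x
      exact this.const_mul 2
    exact h1.sub h2
  apply antitoneOn_of_deriv_nonpos (convex_Icc 0 1)
  · have : Continuous (Qf n) := by unfold Qf; continuity
    exact this.continuousOn
  · exact fun x _ => ((hderiv x).differentiableAt).differentiableWithinAt
  · intro x hx
    rw [interior_Icc] at hx
    rw [(hderiv x).deriv]
    have hx0 : (0:ℝ) ≤ x := le_of_lt hx.1
    have hx1 : x ≤ 1 := le_of_lt hx.2
    have key : (((n:ℝ)-1) * (n:ℝ) / 2) * x^(n-1) ≤ ∑ k ∈ Finset.range (n-1), ((k:ℝ)+1) * x^k := by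
      have h1 : ∑ k ∈ Finset.range (n-1), ((k:ℝ)+1) * x^(n-1)
          ≤ ∑ k ∈ Finset.range (n-1), ((k:ℝ)+1) * x^k := by
        apply Finset.sum_le_sum
        intro k hk
        have hkn : k ≤ n - 1 := le_of_lt (Finset.mem_range.mp hk)
        exact mul_le_mul_of_nonneg_left (pow_le_pow_of_le_one hx0 hx1 hkn) (by positivity)
      calc (((n:ℝ)-1) * (n:ℝ) / 2) * x^(n-1)
          = (∑ k ∈ Finset.range (n-1), ((k:ℝ)+1)) * x^(n-1) := by
            rw [gauss (n-1), hcast]; ring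
        _ = ∑ k ∈ Finset.range (n-1), ((k:ℝ)+1) * x^(n-1) := by rw [Finset.sum_mul]
        _ ≤ _ := h1
    nlinarith [key]


/-- appendix example, monotonicity and bound: `Φ` is nondecreasing on `(0,1]`,
tends to `0` as `μ → 0⁺`, equals `(n−1)/(n(n+1))` at `μ = 1`, and hence is bounded by
`(n−1)/(n(n+1))` on `(0,1]`. -/
theorem group_specific_prize_monotone_bound (n : ℕ) (hn : 2 ≤ n) :
    MonotoneOn (PhiOut n) (Set.Ioc (0:ℝ) 1) ∧
    Filter.Tendsto (PhiOut n) (nhdsWithin 0 (Set.Ioi 0)) (nhds 0) ∧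
    PhiOut n 1 = ((n:ℝ) - 1) / ((n:ℝ) * ((n:ℝ) + 1)) ∧
    ∀ μ ∈ Set.Ioc (0:ℝ) 1, PhiOut n μ ≤ ((n:ℝ) - 1) / ((n:ℝ) * ((n:ℝ) + 1)) := by
  have hn1 : 1 ≤ n := by omega
  have hnpos : (0:ℝ) < (n:ℝ) := by exact_mod_cast Nat.pos_of_ne_zero (by omega)
  have hC : (0:ℝ) < (n:ℝ) * ((n:ℝ)+1) := by positivity
  have hanti := Qf_anti n hn
  have hmono : MonotoneOn (PhiOut n) (Set.Ioc (0:ℝ) 1) := by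
    intro a ha b hb hab
    rw [phi_eq n hn1 (ne_of_gt ha.1) hC.ne', phi_eq n hn1 (ne_of_gt hb.1) hC.ne']
    have hQ : Qf n (1-a) ≤ Qf n (1-b) := by
      apply hanti (a := 1-b) (b := 1-a)
      · constructor <;> [linarith [hb.2]; linarith [hb.1]]
      · constructor <;> [linarith [ha.2]; linarith [ha.1]]
      · linarith
    exact div_le_div_of_nonneg_right hQ hC.le |>.trans_eq rfl
  refine ⟨hmono, ?_, ?_, ?_⟩
  · -- limit
    have hQ1 : Qf n 1 = 0 := by
      have hcast : ((n-1 : ℕ) : ℝ) = (n:ℝ) - 1 := by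
        push_cast [Nat.cast_pred (by omega : 0 < n)]; ring
      simp [Qf, hcast]; ring
    have hcont : Filter.Tendsto (fun μ : ℝ => Qf n (1-μ) / ((n:ℝ) * ((n:ℝ)+1)))
        (nhdsWithin 0 (Set.Ioi 0)) (nhds 0) := by
      have : Continuous (fun μ : ℝ => Qf n (1-μ) / ((n:ℝ) * ((n:ℝ)+1))) := by
        apply Continuous.div_const
        exact (by unfold Qf; continuity : Continuous (Qf n)).comp (by continuity)
      have h0 : (fun μ : ℝ => Qf n (1-μ) / ((n:ℝ) * ((n:ℝ)+1))) 0 = 0 := by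
        simp [hQ1]
      have h2 := (this.tendsto 0).mono_left (nhdsWithin_le_nhds (s := Set.Ioi 0))
      simpa [hQ1] using h2
    apply Filter.Tendsto.congr' _ hcont
    filter_upwards [self_mem_nhdsWithin] with μ hμ
    exact (phi_eq n hn1 (ne_of_gt hμ) hC.ne').symm
  · -- value at 1
    unfold PhiOut
    rw [show (1:ℝ) - 1 = 0 by ring, zero_pow (by omega : n ≠ 0)]
    ring_nf
  · intro μ hμ
    have h1 : (1:ℝ) ∈ Set.Ioc (0:ℝ) 1 := by norm_num
    have := hmono hμ h1 hμ.2
    calc PhiOut n μ ≤ PhiOut n 1 := this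
      _ = ((n:ℝ) - 1) / ((n:ℝ) * ((n:ℝ) + 1)) := by
          unfold PhiOut
          rw [show (1:ℝ) - 1 = 0 by ring, zero_pow (by omega : n ≠ 0)]
          ring_nf
end
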